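/- Let, for each n, S_n be a finite state space with a stationary reversible continuous-time Markov chain X^(n), with orthonormal eigenbasis {ψ_i^(n)} of the negative generator and eigenvalues {λ_i^(n)}, indexed so λ_1^(n) = 0 corresponds to the constant eigenvector. A sequence of Boolean functions f_n : S_n → {0,1} satisfies lim_{ε→0} limsup_n P(f_n(X_0^(n)) ≠ f_n(X_ε^(n))) = 0 if and only if for every δ > 0 there exists k ∈ ℕ such that sup_n Σ_{i : λ_i^(n) ≥ k} ⟨f_n, ψ_i^(n)⟩² < δ. -/

import Mathlib

open Finset Filter

section Aux
open NormedSpace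

lemma exp_mulVec_eigen {m : Type} [Fintype m] [DecidableEq m]
    (M : Matrix m m ℝ) (v : m → ℝ) (μ : ℝ) (h : M.mulVec v = μ • v) :
    (exp M).mulVec v = Real.exp μ • v := by
  letI : SeminormedRing (Matrix m m ℝ) := Matrix.linftyOpSemiNormedRing
  letI : NormedRing (Matrix m m ℝ) := Matrix.linftyOpNormedRing
  letI : NormedAlgebra ℝ (Matrix m m ℝ) := Matrix.linftyOpNormedAlgebra
  have hpow : ∀ k : ℕ, (M ^ k).mulVec v = (μ ^ k) • v := by
    intro k
    induction k with
    | zero => simp [Matrix.mulVec_one]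
    | succ k ih =>
      rw [pow_succ, ← Matrix.mulVec_mulVec, h, Matrix.mulVec_smul, ih, smul_smul, pow_succ]
      ring_nf
  let L : Matrix m m ℝ →ₗ[ℝ] (m → ℝ) :=
    { toFun := fun A => A.mulVec v
      map_add' := fun A B => Matrix.add_mulVec A B v
      map_smul' := fun c A => Matrix.smul_mulVec c A v }
  have hL : Continuous L := L.continuous_of_finiteDimensional
  let L' : Matrix m m ℝ →L[ℝ] (m → ℝ) := ⟨L, hL⟩
  have h1 : (exp M).mulVec v = L' (exp M) := rfl
  rw [h1, exp_eq_tsum ℝ, L'.map_tsum (expSeries_summable' (𝕂 := ℝ) M)]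
  have h2 : ∀ k : ℕ, L' (((k.factorial : ℝ)⁻¹) • M ^ k) = (((k.factorial : ℝ)⁻¹) * μ ^ k) • v := by
    intro k
    rw [map_smul]
    show ((k.factorial : ℝ)⁻¹) • (M ^ k).mulVec v = _
    rw [hpow, smul_smul]
  simp_rw [h2]
  rw [Summable.tsum_smul_const]
  · congr 1
    rw [Real.exp_eq_exp_ℝ, exp_eq_tsum ℝ]
    simp [smul_eq_mul]
  · simpa [smul_eq_mul] using expSeries_summable' (𝕂 := ℝ) μ

lemma sum_coeff_sq {m : Type} [Fintype m]
    (π : m → ℝ) (ψ : m → m → ℝ)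
    (hcomplete : ∀ (g : m → ℝ) x, g x = ∑ i, (∑ y, π y * g y * ψ i y) * ψ i x)
    (f : m → ℝ) (hf : ∀ x, f x = 0 ∨ f x = 1) :
    ∑ i, (∑ x, π x * f x * ψ i x) ^ 2 = ∑ x, π x * f x := by
  have hff : ∀ x, f x * f x = f x := by
    intro x; rcases hf x with h | h <;> rw [h] <;> ring
  symm
  calc ∑ x, π x * f x = ∑ x, π x * f x * f x := by
          exact Finset.sum_congr rfl fun x _ => by rw [mul_assoc, hff]
    _ = ∑ x, ∑ i, (∑ y, π y * f y * ψ i y) * (π x * f x * ψ i x) := by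
          refine Finset.sum_congr rfl fun x _ => ?_
          have hre : ∑ i, (∑ y, π y * f y * ψ i y) * (π x * f x * ψ i x)
              = π x * f x * ∑ i, (∑ y, π y * f y * ψ i y) * ψ i x := by
            rw [Finset.mul_sum]
            exact Finset.sum_congr rfl fun i _ => by ring
          rw [hre, ← hcomplete f x]
    _ = ∑ i, (∑ x, π x * f x * ψ i x) ^ 2 := by
          rw [Finset.sum_comm]
          refine Finset.sum_congr rfl fun i _ => ?_
          rw [← Finset.mul_sum]
          ring

lemma chain_identity {m : Type} [Fintype m] [DecidableEq m]
    (π : m → ℝ) (Q : Matrix m m ℝ) (hgen : ∀ x, ∑ y, Q x y = 0)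
    (ψ : m → m → ℝ) (lam : m → ℝ)
    (heig : ∀ i, (-Q).mulVec (ψ i) = lam i • ψ i)
    (hcomplete : ∀ (g : m → ℝ) x, g x = ∑ i, (∑ y, π y * g y * ψ i y) * ψ i x)
    (f : m → ℝ) (hf : ∀ x, f x = 0 ∨ f x = 1) (ε : ℝ) :
    ∑ x, ∑ y, π x * (exp (ε • Q)) x y * (f x - f y) ^ 2
      = 2 * ∑ i, (1 - Real.exp (-(ε * lam i))) * (∑ x, π x * f x * ψ i x) ^ 2 := by
  set E := exp (ε • Q) with hE
  set c : m → ℝ := fun i => Real.exp (-(ε * lam i)) with hc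
  have hff : ∀ x, f x * f x = f x := by
    intro x; rcases hf x with h | h <;> rw [h] <;> ring
  have heig' : ∀ i, E.mulVec (ψ i) = c i • ψ i := by
    intro i
    have h2 : Q.mulVec (ψ i) = (-(lam i)) • ψ i := by
      have := heig i
      rw [Matrix.neg_mulVec] at this
      rw [← neg_neg (Q.mulVec (ψ i)), this, neg_smul]
    have h1 : (ε • Q).mulVec (ψ i) = (-(ε * lam i)) • ψ i := by
      rw [Matrix.smul_mulVec, h2, smul_smul]
      ring_nf
    exact exp_mulVec_eigen _ _ _ h1
  have hEψ : ∀ i x, ∑ y, E x y * ψ i y = c i * ψ i x := by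
    intro i x
    have := congrFun (heig' i) x
    simpa [Matrix.mulVec, dotProduct] using this
  have hrow : ∀ x, ∑ y, E x y = 1 := by
    intro x
    have h1 : (ε • Q).mulVec (fun _ => 1) = (0 : ℝ) • (fun _ => (1:ℝ)) := by
      funext z
      simp [Matrix.mulVec, dotProduct, ← Finset.mul_sum, hgen z]
    have h2 := congrFun (exp_mulVec_eigen (ε • Q) (fun _ => 1) 0 h1) x
    simpa [Matrix.mulVec, dotProduct] using h2
  have hEg : ∀ (g : m → ℝ) x, ∑ y, E x y * g y
      = ∑ i, (∑ y, π y * g y * ψ i y) * (c i * ψ i x) := by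
    intro g x
    calc ∑ y, E x y * g y
        = ∑ y, ∑ i, (∑ z, π z * g z * ψ i z) * (E x y * ψ i y) := by
          refine Finset.sum_congr rfl fun y _ => ?_
          rw [show g y = ∑ i, (∑ z, π z * g z * ψ i z) * ψ i y from hcomplete g y,
            Finset.mul_sum]
          exact Finset.sum_congr rfl fun i _ => by ring
      _ = ∑ i, (∑ z, π z * g z * ψ i z) * (∑ y, E x y * ψ i y) := by
          rw [Finset.sum_comm]
          exact Finset.sum_congr rfl fun i _ => by rw [Finset.mul_sum]
      _ = ∑ i, (∑ y, π y * g y * ψ i y) * (c i * ψ i x) := by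
          refine Finset.sum_congr rfl fun i _ => by rw [hEψ]
  have h1 : ∀ x, ∑ i, (∑ y, π y * ψ i y) * (c i * ψ i x) = 1 := by
    intro x
    have h2 := hEg (fun _ => 1) x
    simp only [mul_one] at h2
    rw [← h2, hrow]
  have hsa : ∑ x, π x * f x = ∑ i, (∑ x, π x * f x * ψ i x) ^ 2 :=
    (sum_coeff_sq π ψ hcomplete f hf).symm
  have key : ∑ x, ∑ y, π x * E x y * (f x - f y) ^ 2
      = (∑ x, π x * f x) - 2 * (∑ i, c i * (∑ x, π x * f x * ψ i x) ^ 2)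
        + ∑ x, π x * f x := by
    have expand : ∀ x, ∑ y, π x * E x y * (f x - f y) ^ 2
        = π x * f x * f x * (∑ y, E x y) - 2 * (π x * f x * (∑ y, E x y * f y))
          + π x * (∑ y, E x y * (f y * f y)) := by
      intro x
      simp only [Finset.mul_sum]
      rw [← Finset.sum_sub_distrib, ← Finset.sum_add_distrib]
      exact Finset.sum_congr rfl fun y _ => by ring
    have split : ∑ x, ∑ y, π x * E x y * (f x - f y) ^ 2
        = (∑ x, π x * f x * f x * (∑ y, E x y))
          - 2 * (∑ x, π x * f x * (∑ y, E x y * f y))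
          + ∑ x, π x * (∑ y, E x y * (f y * f y)) := by
      simp only [expand]
      rw [Finset.sum_add_distrib, Finset.sum_sub_distrib, ← Finset.mul_sum]
    rw [split]
    congr 1
    · congr 1
      · exact Finset.sum_congr rfl fun x _ => by rw [hrow, mul_one, mul_assoc, hff]
      · congr 1
        calc ∑ x, π x * f x * ∑ y, E x y * f y
            = ∑ x, π x * f x * ∑ i, (∑ y, π y * f y * ψ i y) * (c i * ψ i x) := by
              refine Finset.sum_congr rfl fun x _ => by rw [hEg f x]
          _ = ∑ x, ∑ i, (∑ y, π y * f y * ψ i y) * c i * (π x * f x * ψ i x) := by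
              refine Finset.sum_congr rfl fun x _ => ?_
              rw [Finset.mul_sum]
              exact Finset.sum_congr rfl fun i _ => by ring
          _ = ∑ i, c i * (∑ x, π x * f x * ψ i x) ^ 2 := by
              rw [Finset.sum_comm]
              refine Finset.sum_congr rfl fun i _ => ?_
              rw [← Finset.mul_sum]
              ring
    · calc ∑ x, π x * ∑ y, E x y * (f y * f y)
          = ∑ x, π x * ∑ y, E x y * f y := by
            refine Finset.sum_congr rfl fun x _ => by simp_rw [hff]
        _ = ∑ x, π x * ∑ i, (∑ y, π y * f y * ψ i y) * (c i * ψ i x) := by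
            refine Finset.sum_congr rfl fun x _ => by rw [hEg f x]
        _ = ∑ x, ∑ i, (∑ y, π y * f y * ψ i y) * (c i * (π x * ψ i x)) := by
            refine Finset.sum_congr rfl fun x _ => ?_
            rw [Finset.mul_sum]
            exact Finset.sum_congr rfl fun i _ => by ring
        _ = ∑ i, (∑ y, π y * f y * ψ i y) * (c i * (∑ x, π x * ψ i x)) := by
            rw [Finset.sum_comm]
            refine Finset.sum_congr rfl fun i _ => ?_
            rw [← Finset.mul_sum, ← Finset.mul_sum]
        _ = ∑ i, ∑ y, π y * f y * ((∑ x, π x * ψ i x) * (c i * ψ i y)) := by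
            refine Finset.sum_congr rfl fun i _ => ?_
            rw [Finset.sum_mul]
            exact Finset.sum_congr rfl fun y _ => by ring
        _ = ∑ y, π y * f y * ∑ i, (∑ x, π x * ψ i x) * (c i * ψ i y) := by
            rw [Finset.sum_comm]
            exact Finset.sum_congr rfl fun y _ => by rw [Finset.mul_sum]
        _ = ∑ x, π x * f x := by
            exact Finset.sum_congr rfl fun y _ => by rw [h1, mul_one]
  rw [key, hsa,
    show ∑ i, (1 - c i) * (∑ x, π x * f x * ψ i x) ^ 2
      = ∑ i, ((∑ x, π x * f x * ψ i x) ^ 2 - c i * (∑ x, π x * f x * ψ i x) ^ 2)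
      from Finset.sum_congr rfl fun i _ => by ring,
    Finset.sum_sub_distrib]
  ring

end Aux

/-- Spectral characterization of exclusion/noise stability: for a sequence of stationary
reversible finite Markov chains with orthonormal eigenbases and Boolean functions fₙ,
lim_{ε→0⁺} limsup_n P(fₙ(X₀) ≠ fₙ(X_ε)) = 0 iff for every δ > 0 there is k ∈ ℕ with
sup_n Σ_{i : λᵢ⁽ⁿ⁾ ≥ k} ⟨fₙ, ψᵢ⁽ⁿ⁾⟩² < δ. -/
theorem stability_spectral_characterization
    (S : ℕ → Type) [∀ n, Fintype (S n)] [∀ n, DecidableEq (S n)]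
    (π : ∀ n, S n → ℝ) (hπpos : ∀ n x, 0 < π n x) (hπsum : ∀ n, ∑ x, π n x = 1)
    (Q : ∀ n, Matrix (S n) (S n) ℝ) (hgen : ∀ n x, ∑ y, Q n x y = 0)
    (hrev : ∀ n x y, π n x * Q n x y = π n y * Q n y x)
    (ψ : ∀ n, S n → S n → ℝ) (lam : ∀ n, S n → ℝ)
    (heig : ∀ n i, (-(Q n)).mulVec (ψ n i) = lam n i • ψ n i)
    (hlam : ∀ n i, 0 ≤ lam n i)
    (horth : ∀ n i j, ∑ x, π n x * ψ n i x * ψ n j x = if i = j then 1 else 0)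
    (hcomplete : ∀ n (g : S n → ℝ) x,
      g x = ∑ i, (∑ y, π n y * g y * ψ n i y) * ψ n i x)
    (f : ∀ n, S n → ℝ) (hf : ∀ n x, f n x = 0 ∨ f n x = 1) :
    Tendsto (fun ε : ℝ => limsup (fun n =>
        ∑ x, ∑ y, π n x * (NormedSpace.exp (ε • Q n)) x y * (f n x - f n y) ^ 2)
      atTop) (nhdsWithin 0 (Set.Ioi 0)) (nhds 0)
    ↔ ∀ δ : ℝ, 0 < δ → ∃ k : ℕ, ∀ n,
        (∑ i, if (k : ℝ) ≤ lam n i then (∑ x, π n x * f n x * ψ n i x) ^ 2 else 0) < δ := by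
  classical
  have hDS : ∀ (ε : ℝ) (n : ℕ),
      (∑ x, ∑ y, π n x * (NormedSpace.exp (ε • Q n)) x y * (f n x - f n y) ^ 2)
      = 2 * ∑ i, (1 - Real.exp (-(ε * lam n i))) * (∑ x, π n x * f n x * ψ n i x) ^ 2 :=
    fun ε n => chain_identity (π n) (Q n) (hgen n) (ψ n) (lam n) (heig n)
      (hcomplete n) (f n) (hf n) ε
  set u : ℕ → ℝ → ℝ := fun n ε =>
    2 * ∑ i, (1 - Real.exp (-(ε * lam n i))) * (∑ x, π n x * f n x * ψ n i x) ^ 2 with hu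
  have hFL : (fun ε : ℝ => limsup (fun n =>
        ∑ x, ∑ y, π n x * (NormedSpace.exp (ε • Q n)) x y * (f n x - f n y) ^ 2) atTop)
      = fun ε : ℝ => limsup (fun n => u n ε) atTop := by
    funext ε
    congr 1
    funext n
    exact hDS ε n
  rw [hFL]
  -- basic bounds
  have hA1 : ∀ n, ∑ i, (∑ x, π n x * f n x * ψ n i x) ^ 2 ≤ 1 := by
    intro n
    rw [sum_coeff_sq (π n) (ψ n) (hcomplete n) (f n) (hf n)]
    calc ∑ x, π n x * f n x ≤ ∑ x, π n x := by
          refine Finset.sum_le_sum fun x _ => ?_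
          rcases hf n x with h | h <;> rw [h] <;> nlinarith [hπpos n x]
      _ = 1 := hπsum n
  have hu0 : ∀ n (ε : ℝ), 0 ≤ ε → 0 ≤ u n ε := by
    intro n ε hε
    have : (0:ℝ) ≤ ∑ i, (1 - Real.exp (-(ε * lam n i))) * (∑ x, π n x * f n x * ψ n i x) ^ 2 := by
      refine Finset.sum_nonneg fun i _ => mul_nonneg ?_ (sq_nonneg _)
      have : Real.exp (-(ε * lam n i)) ≤ 1 :=
        Real.exp_le_one_iff.mpr (neg_nonpos.mpr (mul_nonneg hε (hlam n i)))
      linarith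
    simp only [hu]
    linarith
  have hu2 : ∀ n (ε : ℝ), u n ε ≤ 2 := by
    intro n ε
    have h1 : ∑ i, (1 - Real.exp (-(ε * lam n i))) * (∑ x, π n x * f n x * ψ n i x) ^ 2
        ≤ ∑ i, (∑ x, π n x * f n x * ψ n i x) ^ 2 := by
      refine Finset.sum_le_sum fun i _ => ?_
      have := Real.exp_pos (-(ε * lam n i))
      nlinarith [sq_nonneg (∑ x, π n x * f n x * ψ n i x)]
    simp only [hu]
    linarith [hA1 n]
  constructor
  · -- forward direction
    intro T δ hδ
    by_contra hcon
    push_neg at hcon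
    have key : ∀ ε : ℝ, 0 < ε → δ ≤ limsup (fun n => u n ε) atTop := by
      intro ε hε
      refine le_limsup_of_frequently_le ?_ (isBoundedUnder_of ⟨2, fun n => hu2 n ε⟩)
      rw [frequently_atTop]
      intro N
      set K : ℕ := max (⌈Real.log 2 / ε⌉₊)
        ((Finset.range (N+1)).sup (fun mm => (∑ i, ⌈lam mm i⌉₊) + 1)) with hK
      obtain ⟨n, hn⟩ := hcon K
      have hlamlt : ∀ mm ∈ Finset.range (N+1), ∀ i, lam mm i < (K : ℝ) := by
        intro mm hmm i
        have h2 : (∑ j, ⌈lam mm j⌉₊) + 1 ≤ K :=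
          le_trans (Finset.le_sup (f := fun mm => (∑ i, ⌈lam mm i⌉₊) + 1) hmm) (le_max_right _ _)
        have h3 : ⌈lam mm i⌉₊ < K := by
          have h4 : ⌈lam mm i⌉₊ ≤ ∑ j, ⌈lam mm j⌉₊ :=
            Finset.single_le_sum (f := fun j => ⌈lam mm j⌉₊) (fun j _ => Nat.zero_le _)
              (mem_univ i)
          omega
        calc lam mm i ≤ (⌈lam mm i⌉₊ : ℝ) := Nat.le_ceil _
          _ < (K : ℝ) := by exact_mod_cast h3
      have hnN : N ≤ n := by
        by_contra hh
        push_neg at hh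
        have hz : (∑ i, if (K : ℝ) ≤ lam n i
            then (∑ x, π n x * f n x * ψ n i x) ^ 2 else 0) = 0 := by
          refine Finset.sum_eq_zero fun i _ => ?_
          rw [if_neg (not_le.mpr (hlamlt n (Finset.mem_range.mpr (by omega)) i))]
        rw [hz] at hn
        linarith
      refine ⟨n, hnN, ?_⟩
      -- show δ ≤ u n ε
      have hKlog : Real.exp (-(ε * K)) ≤ 1/2 := by
        have h1 : Real.log 2 / ε ≤ (K : ℝ) :=
          le_trans (Nat.le_ceil _) (by exact_mod_cast le_max_left _ _)
        have h2 : Real.log 2 ≤ ε * K := by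
          rw [div_le_iff₀ hε] at h1
          linarith [h1]
        calc Real.exp (-(ε * K)) ≤ Real.exp (-(Real.log 2)) :=
              Real.exp_le_exp.mpr (by linarith)
          _ = 1/2 := by
              rw [Real.exp_neg, Real.exp_log (by norm_num : (0:ℝ) < 2)]
              norm_num
      have hterm : ∀ i ∈ (univ : Finset (S n)),
          (if (K : ℝ) ≤ lam n i then (1/2) * (∑ x, π n x * f n x * ψ n i x) ^ 2 else 0)
          ≤ (1 - Real.exp (-(ε * lam n i))) * (∑ x, π n x * f n x * ψ n i x) ^ 2 := by
        intro i _
        by_cases hik : (K : ℝ) ≤ lam n i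
        · rw [if_pos hik]
          have hmono : Real.exp (-(ε * lam n i)) ≤ Real.exp (-(ε * K)) :=
            Real.exp_le_exp.mpr (by nlinarith)
          have : (1:ℝ)/2 ≤ 1 - Real.exp (-(ε * lam n i)) := by linarith
          exact mul_le_mul_of_nonneg_right this (sq_nonneg _)
        · rw [if_neg hik]
          refine mul_nonneg ?_ (sq_nonneg _)
          have : Real.exp (-(ε * lam n i)) ≤ 1 :=
            Real.exp_le_one_iff.mpr (neg_nonpos.mpr (mul_nonneg hε.le (hlam n i)))
          linarith
      have hhalf : (1/2) * (∑ i, if (K : ℝ) ≤ lam n i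
            then (∑ x, π n x * f n x * ψ n i x) ^ 2 else 0)
          ≤ ∑ i, (1 - Real.exp (-(ε * lam n i))) * (∑ x, π n x * f n x * ψ n i x) ^ 2 := by
        rw [Finset.mul_sum]
        refine le_trans (le_of_eq (Finset.sum_congr rfl fun i _ => ?_))
          (Finset.sum_le_sum hterm)
        rw [mul_ite, mul_zero]
      simp only [hu]
      linarith
    have h1 : ∀ᶠ ε in nhdsWithin (0:ℝ) (Set.Ioi 0),
        limsup (fun n => u n ε) atTop < δ := T.eventually (Filter.Tendsto.eventually_lt_const hδ tendsto_id)
    have h2 : ∀ᶠ ε in nhdsWithin (0:ℝ) (Set.Ioi 0), (0:ℝ) < ε :=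
      eventually_mem_nhdsWithin
    obtain ⟨ε, hε1, hε2⟩ := (h1.and h2).exists
    exact absurd hε1 (not_lt.mpr (key ε hε2))
  · -- backward direction
    intro H
    rw [Metric.tendsto_nhdsWithin_nhds]
    intro δ hδ
    obtain ⟨k, hk⟩ := H (δ/4) (by linarith)
    refine ⟨δ / (8 * (k+1)), by positivity, ?_⟩
    intro ε hεIoi hεdist
    have hε : 0 < ε := hεIoi
    rw [Real.dist_eq, sub_zero, abs_of_pos hε] at hεdist
    rw [Real.dist_eq, sub_zero]
    have hek1 : Real.exp (-(ε * k)) ≤ 1 :=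
      Real.exp_le_one_iff.mpr (neg_nonpos.mpr (by positivity))
    have hek2 : 1 - Real.exp (-(ε * k)) ≤ ε * k := by
      have := Real.add_one_le_exp (-(ε * k))
      linarith
    have hub : ∀ n, u n ε ≤ 3 * δ / 4 := by
      intro n
      have hterm : ∀ i ∈ (univ : Finset (S n)),
          (1 - Real.exp (-(ε * lam n i))) * (∑ x, π n x * f n x * ψ n i x) ^ 2
          ≤ (1 - Real.exp (-(ε * k))) * (∑ x, π n x * f n x * ψ n i x) ^ 2
            + (if (k : ℝ) ≤ lam n i then (∑ x, π n x * f n x * ψ n i x) ^ 2 else 0) := by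
        intro i _
        by_cases hik : (k : ℝ) ≤ lam n i
        · rw [if_pos hik]
          have he1 := Real.exp_pos (-(ε * lam n i))
          nlinarith [sq_nonneg (∑ x, π n x * f n x * ψ n i x)]
        · rw [if_neg hik, add_zero]
          push_neg at hik
          have hmono : Real.exp (-(ε * k)) ≤ Real.exp (-(ε * lam n i)) :=
            Real.exp_le_exp.mpr (by nlinarith)
          exact mul_le_mul_of_nonneg_right (by linarith) (sq_nonneg _)
      have h3 : ∑ i, (1 - Real.exp (-(ε * lam n i))) * (∑ x, π n x * f n x * ψ n i x) ^ 2
          ≤ (1 - Real.exp (-(ε * k))) * (∑ i, (∑ x, π n x * f n x * ψ n i x) ^ 2)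
            + ∑ i, (if (k : ℝ) ≤ lam n i then (∑ x, π n x * f n x * ψ n i x) ^ 2 else 0) := by
        refine le_trans (Finset.sum_le_sum hterm) (le_of_eq ?_)
        rw [Finset.sum_add_distrib, Finset.mul_sum]
      have h4 : (1 - Real.exp (-(ε * k))) * (∑ i, (∑ x, π n x * f n x * ψ n i x) ^ 2)
          ≤ ε * k := by
        have hnn : 0 ≤ 1 - Real.exp (-(ε * k)) := by
          have : Real.exp (-(ε * k)) ≤ 1 :=
            Real.exp_le_one_iff.mpr (neg_nonpos.mpr (by positivity))
          linarith
        calc (1 - Real.exp (-(ε * k))) * (∑ i, (∑ x, π n x * f n x * ψ n i x) ^ 2)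
            ≤ (1 - Real.exp (-(ε * k))) * 1 := mul_le_mul_of_nonneg_left (hA1 n) hnn
          _ = 1 - Real.exp (-(ε * k)) := mul_one _
          _ ≤ ε * k := hek2
      have h5 : ε * k ≤ δ / 8 := by
        have : ε * k ≤ (δ / (8 * (k+1))) * k := by
          apply mul_le_mul_of_nonneg_right hεdist.le (by positivity)
        calc ε * k ≤ (δ / (8 * (k+1))) * k := this
          _ ≤ δ / 8 := by
              rw [div_mul_eq_mul_div, div_le_div_iff₀ (by positivity) (by norm_num)]
              nlinarith
      have h6 := hk n
      simp only [hu]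
      linarith [h3, h4, h5, h6]
    have hF1 : limsup (fun n => u n ε) atTop ≤ 3 * δ / 4 :=
      limsup_le_of_le (isCoboundedUnder_le_of_le atTop (fun n => hu0 n ε hε.le))
        (Eventually.of_forall hub)
    have hF0 : 0 ≤ limsup (fun n => u n ε) atTop :=
      le_limsup_of_frequently_le (Frequently.of_forall fun n => hu0 n ε hε.le)
        (isBoundedUnder_of ⟨2, fun n => hu2 n ε⟩)
    rw [abs_of_nonneg hF0]
    linarith
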